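/- Let r, σ, b > 0 and a ∈ ℝ with b = 1, a > 0, σ > a·r and 0 < r < 1. Then the only zero of the vector field f of the Lorenz-like system (i.e., the only equilibrium) is the origin: f(x, y, z) = (0, 0, 0) implies (x, y, z) = (0, 0, 0). -/
import Mathlib


/-- For the Lorenz-like system with `b = 1`, `a > 0`, `σ > a·r` and `0 < r < 1`, the origin is the
only equilibrium. -/
theorem stmt_3 (r σ b a : ℝ) (hr : 0 < r) (hσ : 0 < σ) (hb : 0 < b)
    (hb1 : b = 1) (ha : 0 < a) (hσar : a * r < σ) (hr1 : r < 1) :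
    ∀ x y z : ℝ,
      (-σ * (x - y) - a * y * z, r * x - y - x * z, -b * z + x * y)
        = ((0 : ℝ), (0 : ℝ), (0 : ℝ)) →
      (x, y, z) = ((0 : ℝ), (0 : ℝ), (0 : ℝ)) := by
  intro x y z h
  subst hb1
  obtain ⟨h1, h2, h3⟩ : (-σ * (x - y) - a * y * z = 0) ∧ (r * x - y - x * z = 0) ∧ (-1 * z + x * y = 0) := by
    simpa [Prod.ext_iff] using h
  -- z = x * y
  have hz : z = x * y := by linarith
  subst hz
  -- y * (1 + x^2) = r * x
  have hy : y * (1 + x^2) = r * x := by nlinarith [h2]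
  have hkey : x * (σ * (1 + x^2 - r) * (1 + x^2) + a * r^2 * x^2) = 0 := by
    linear_combination (-(1+x^2)^2) * h1 + (σ*(1+x^2) - a*x*(r*x + y*(1+x^2))) * hy
  have hpos : σ * (1 + x^2 - r) * (1 + x^2) + a * r^2 * x^2 > 0 := by
    have h1x : (0:ℝ) < 1 + x^2 := by positivity
    have : 0 < 1 + x^2 - r := by nlinarith [sq_nonneg x]
    have hq : 0 ≤ a * r^2 * x^2 := by positivity
    have hp := mul_pos (mul_pos hσ this) h1x
    linarith
  have hx : x = 0 := by
    rcases mul_eq_zero.mp hkey with h | h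
    · exact h
    · exact absurd h (ne_of_gt hpos)
  subst hx
  have hy0 : y = 0 := by nlinarith [hy]
  simp [hy0]
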